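/- Let 𝔽 be a field and f₁,…,f_m ∈ 𝔽[x₁,…,x_n]. There exists a polynomial C ∈ 𝔽[x₁,…,x_n, y₁,…,y_m, z₁,…,z_n] such that (1) C(x̄, 0̄, 0̄) = 0 and (2) C(x̄, f₁(x̄),…,f_m(x̄), x₁²−x₁,…,x_n²−x_n) = 1 as a formal polynomial identity, if and only if f₁,…,f_m have no common zero in {0,1}ⁿ. -/

import Mathlib

open MvPolynomial

private lemma finSuccEquiv_rename_succ {F : Type*} [CommRing F] {n : ℕ}
    (a : MvPolynomial (Fin n) F) :
    finSuccEquiv F n (rename Fin.succ a) = Polynomial.C a := by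
  induction a using MvPolynomial.induction_on with
  | C r => simp [finSuccEquiv_apply]
  | add p q hp hq => simp [hp, hq]
  | mul_X p i hp => simp [hp, finSuccEquiv_X_succ]

private lemma rename_succ_mem_span {F : Type*} [CommRing F] {n : ℕ}
    {a : MvPolynomial (Fin n) F}
    (h : a ∈ Ideal.span (Set.range fun i : Fin n => (X i : MvPolynomial (Fin n) F) ^ 2 - X i)) :
    rename (Fin.succ : Fin n → Fin (n+1)) a ∈
      Ideal.span (Set.range fun i : Fin (n+1) => (X i : MvPolynomial (Fin (n+1)) F) ^ 2 - X i) := by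
  obtain ⟨c, hc⟩ := Ideal.mem_span_range_iff_exists_fun.mp h
  rw [← hc, map_sum]
  refine Ideal.sum_mem _ fun i _ => ?_
  rw [map_mul]
  have h2 : (rename (Fin.succ : Fin n → Fin (n+1))) ((X i : MvPolynomial (Fin n) F) ^ 2 - X i)
      = (X i.succ : MvPolynomial (Fin (n+1)) F) ^ 2 - X i.succ := by simp
  rw [h2]
  exact Ideal.mul_mem_left _ _ (Ideal.subset_span ⟨i.succ, rfl⟩)

private lemma mem_bool_span {F : Type*} [Field F] :
    ∀ (n : ℕ) (p : MvPolynomial (Fin n) F),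
      (∀ e : Fin n → F, (∀ i, e i = 0 ∨ e i = 1) → eval e p = 0) →
      p ∈ Ideal.span (Set.range fun i : Fin n => (X i : MvPolynomial (Fin n) F) ^ 2 - X i)
  | 0, p, h => by
      obtain ⟨a, rfl⟩ := MvPolynomial.C_surjective (Fin 0) p
      have h0 := h (fun i => i.elim0) (fun i => i.elim0)
      simp only [eval_C] at h0
      simp [h0]
  | (n+1), p, h => by
      set q := finSuccEquiv F n p with hq
      set d : Polynomial (MvPolynomial (Fin n) F) := Polynomial.X ^ 2 - Polynomial.X with hd
      have hmonic : d.Monic := by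
        have h1 : Polynomial.degree (Polynomial.X : Polynomial (MvPolynomial (Fin n) F)) < 2 := by
          rw [Polynomial.degree_X]; exact_mod_cast one_lt_two
        simpa [hd] using Polynomial.monic_X_pow_sub (n := 2) h1
      set r := q %ₘ d with hr
      set c := q /ₘ d with hcq
      have hdecomp : r + d * c = q := Polynomial.modByMonic_add_div q d
      have hdegd : d.degree = 2 := by
        rw [hd]
        rw [Polynomial.degree_sub_eq_left_of_degree_lt] <;>
          simp [Polynomial.degree_X_pow]
      have hdegr : r.degree ≤ 1 := by
        have h2 := Polynomial.degree_modByMonic_lt q hmonic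
        rw [hdegd] at h2
        exact Order.le_of_lt_succ (by exact_mod_cast h2)
      have hrXC := Polynomial.eq_X_add_C_of_degree_le_one hdegr
      set r1 := r.coeff 1 with hr1
      set r0 := r.coeff 0 with hr0
      have heval : ∀ (e : Fin n → F), (∀ i, e i = 0 ∨ e i = 1) → ∀ y : F, (y = 0 ∨ y = 1) →
          Polynomial.eval y (Polynomial.map (eval e) q) = 0 := by
        intro e he y hy
        rw [← eval_eq_eval_mv_eval']
        exact h _ (fun i => Fin.cases hy he i)
      have h0 : ∀ e : Fin n → F, (∀ i, e i = 0 ∨ e i = 1) → eval e (r0) = 0 := by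
        intro e he
        have h00 := heval e he 0 (Or.inl rfl)
        rw [← hdecomp] at h00
        rw [hrXC] at h00
        simpa [hd] using h00
      have h1 : ∀ e : Fin n → F, (∀ i, e i = 0 ∨ e i = 1) → eval e (r1) = 0 := by
        intro e he
        have h01 := heval e he 1 (Or.inr rfl)
        rw [← hdecomp] at h01
        rw [hrXC] at h01
        have h00 := h0 e he
        simp [hd, h00] at h01
        simpa using h01
      have hp' : p = rename Fin.succ (r1) * X 0 + rename Fin.succ (r0)
          + (X 0 ^ 2 - X 0) * (finSuccEquiv F n).symm c := by
        apply (finSuccEquiv F n).injective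
        rw [map_add, map_add, map_mul, map_mul, finSuccEquiv_rename_succ,
          finSuccEquiv_rename_succ, finSuccEquiv_X_zero, map_sub, map_pow,
          finSuccEquiv_X_zero, AlgEquiv.apply_symm_apply]
        rw [← hq, ← hdecomp, hrXC, hd]
      rw [hp']
      refine Ideal.add_mem _ (Ideal.add_mem _ ?_ ?_) ?_
      · exact Ideal.mul_mem_right _ _ (rename_succ_mem_span (mem_bool_span n (r1) h1))
      · exact rename_succ_mem_span (mem_bool_span n (r0) h0)
      · exact Ideal.mul_mem_right _ _ (Ideal.subset_span ⟨0, rfl⟩)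

/-- **Soundness and completeness of IPS.** There exists an IPS certificate
`C(x̄, ȳ, z̄)` — i.e. `C(x̄,0̄,0̄) = 0` and substituting `y_j ↦ f_j` and `z_i ↦ x_i² - x_i`
gives the constant `1` — iff `f₁,…,f_m` have no common zero in `{0,1}ⁿ`. -/
theorem stmt_7 (F : Type*) [Field F] (n m : ℕ)
    (f : Fin m → MvPolynomial (Fin n) F) :
    (∃ Cert : MvPolynomial (Fin n ⊕ (Fin m ⊕ Fin n)) F,
        aeval (Sum.elim X (Sum.elim (fun _ => (0 : MvPolynomial (Fin n) F))
          (fun _ => (0 : MvPolynomial (Fin n) F)))) Cert = 0 ∧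
        aeval (Sum.elim X (Sum.elim f (fun i => X i ^ 2 - X i))) Cert = 1) ↔
      ¬ ∃ e : Fin n → F, (∀ i, e i = 0 ∨ e i = 1) ∧ ∀ j, eval e (f j) = 0 := by
  classical
  constructor
  · rintro ⟨Cert, hz, ho⟩ ⟨e, he, hf⟩
    have c1 : aeval e (aeval (Sum.elim X (Sum.elim f (fun i => X i ^ 2 - X i))) Cert)
        = aeval (fun s => aeval e ((Sum.elim X (Sum.elim f (fun i => X i ^ 2 - X i))) s)) Cert := by
      rw [← comp_aeval]; rfl
    have c0 : aeval e (aeval (Sum.elim X (Sum.elim (fun _ => (0 : MvPolynomial (Fin n) F))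
          (fun _ => (0 : MvPolynomial (Fin n) F)))) Cert)
        = aeval (fun s => aeval e ((Sum.elim X (Sum.elim (fun _ => (0 : MvPolynomial (Fin n) F))
          (fun _ => (0 : MvPolynomial (Fin n) F)))) s)) Cert := by
      rw [← comp_aeval]; rfl
    have hfun : (fun s => aeval e ((Sum.elim X (Sum.elim f (fun i => X i ^ 2 - X i))) s))
        = (fun s => aeval e ((Sum.elim X (Sum.elim (fun _ => (0 : MvPolynomial (Fin n) F))
          (fun _ => (0 : MvPolynomial (Fin n) F)))) s)) := by
      funext s
      rcases s with i | j | i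
      · rfl
      · have : aeval e (f j) = eval e (f j) := by rw [aeval_def]; rfl
        simp [this, hf j]
      · rcases he i with h | h <;> simp [h]
    have h1 : (1 : F) = 0 := by
      rw [ho] at c1; rw [hz] at c0
      rw [map_one] at c1; rw [map_zero] at c0
      rw [c1, hfun, ← c0]
    exact one_ne_zero h1
  · intro hno
    push_neg at hno
    set toF : (Fin n → Bool) → (Fin n → F) := fun b i => if b i then 1 else 0 with htoF
    have hbool : ∀ b : Fin n → Bool, ∀ i, toF b i = 0 ∨ toF b i = 1 := by
      intro b i; by_cases hb : b i <;> simp [toF, hb]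
    have hex : ∀ b : Fin n → Bool, ∃ j, eval (toF b) (f j) ≠ 0 := fun b => hno (toF b) (hbool b)
    choose j hj using hex
    set δ : (Fin n → Bool) → MvPolynomial (Fin n) F :=
      fun b => ∏ i, (if b i then X i else 1 - X i) with hδ
    have hδeval : ∀ b b' : Fin n → Bool, eval (toF b') (δ b) = if b' = b then 1 else 0 := by
      intro b b'
      rw [hδ]
      simp only [map_prod]
      by_cases hbb : b' = b
      · subst hbb; rw [if_pos rfl]
        apply Finset.prod_eq_one
        intro i _
        by_cases hb : b' i <;> simp [toF, hb]
      · rw [if_neg hbb]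
        obtain ⟨i, hi⟩ : ∃ i, b' i ≠ b i := by
          by_contra hc; push_neg at hc; exact hbb (funext hc)
        apply Finset.prod_eq_zero (Finset.mem_univ i)
        cases hb : b i <;> cases hb' : b' i <;> simp_all [toF]
    set P : MvPolynomial (Fin n) F :=
      ∑ b : Fin n → Bool, C (eval (toF b) (f (j b)))⁻¹ * δ b * f (j b) with hP
    have hPeval : ∀ b' : Fin n → Bool, eval (toF b') P = 1 := by
      intro b'
      rw [hP, map_sum]
      rw [Finset.sum_eq_single b']
      · simp only [map_mul, eval_C, hδeval, eq_self_iff_true, if_true, mul_one]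
        exact inv_mul_cancel₀ (hj b')
      · intro b _ hb
        have : b' ≠ b := Ne.symm hb
        simp [hδeval, this]
      · simp
    have hvanish : ∀ e : Fin n → F, (∀ i, e i = 0 ∨ e i = 1) → eval e (1 - P) = 0 := by
      intro e he
      have hb : e = toF (fun i => decide (e i = 1)) := by
        funext i
        rcases he i with h | h <;> simp [toF, h]
      rw [hb, map_sub, hPeval, map_one, sub_self]
    obtain ⟨hc, hhc⟩ := Ideal.mem_span_range_iff_exists_fun.mp (mem_bool_span n (1 - P) hvanish)
    refine ⟨(∑ b : Fin n → Bool, rename Sum.inl (C (eval (toF b) (f (j b)))⁻¹ * δ b) *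
        X (Sum.inr (Sum.inl (j b)))) +
      ∑ i : Fin n, rename Sum.inl (hc i) * X (Sum.inr (Sum.inr i)), ?_, ?_⟩
    · simp
    · rw [map_add, map_sum, map_sum]
      have e1 : ∀ b : Fin n → Bool,
          aeval (Sum.elim X (Sum.elim f (fun i => X i ^ 2 - X i)))
            (rename Sum.inl (C (eval (toF b) (f (j b)))⁻¹ * δ b) * X (Sum.inr (Sum.inl (j b))))
          = C (eval (toF b) (f (j b)))⁻¹ * δ b * f (j b) := by
        intro b
        rw [map_mul, aeval_X, aeval_rename]
        simp [aeval_X_left_apply]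
      have e2 : ∀ i : Fin n,
          aeval (Sum.elim X (Sum.elim f (fun i => X i ^ 2 - X i)))
            (rename Sum.inl (hc i) * X (Sum.inr (Sum.inr i)))
          = hc i * (X i ^ 2 - X i) := by
        intro i
        rw [map_mul, aeval_X, aeval_rename]
        simp [aeval_X_left_apply]
      simp only [e1, e2]
      rw [hhc, ← hP]
      ring
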